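/- Let p ∈ Δ_N be a probability vector, l ∈ ℝ^N a nonnegative loss vector with ‖l‖_∞ ≤ G, and η > 0. Then (1/η)·ln(∑_i p_i·e^{-η·l_i}) ≤ -⟨p, l⟩ + (η/2)·∑_i p_i·l_i², and moreover (η/2)·∑_i p_i·l_i² ≤ (ηG/2)·⟨p, l⟩. -/

import Mathlib

lemma exp_neg_le_quad (y : ℝ) (hy : 0 ≤ y) :
    Real.exp (-y) ≤ 1 - y + y ^ 2 / 2 := by
  set g : ℝ → ℝ := fun y => 1 - y + y ^ 2 / 2 - Real.exp (-y) with hg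
  have hd : ∀ x : ℝ, HasDerivAt g (-1 + x + Real.exp (-x)) x := by
    intro x
    have h1 : HasDerivAt (fun y : ℝ => Real.exp (-y)) (-Real.exp (-x)) x := by
      exact ((Real.hasDerivAt_exp (-x)).comp x (hasDerivAt_neg x)).congr_deriv (by ring)
    have h2 : HasDerivAt (fun y : ℝ => 1 - y + y ^ 2 / 2) (-1 + x) x := by
      have ha : HasDerivAt (fun y : ℝ => 1 - y) (-1) x := by
        simpa using (hasDerivAt_id x).const_sub 1
      have hb : HasDerivAt (fun y : ℝ => y ^ 2 / 2) x x := by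
        have := (hasDerivAt_pow 2 x).div_const 2
        simpa using this
      exact ha.add hb
    have := h2.sub h1
    exact this.congr_deriv (by ring)
  have hmono : Monotone g := by
    apply monotone_of_deriv_nonneg
    · exact fun x => (hd x).differentiableAt
    · intro x
      rw [(hd x).deriv]
      have := Real.add_one_le_exp (-x)
      linarith
  have := hmono hy
  simp only [hg] at this
  simp at this
  linarith [this]

theorem hedge_potential_step {N : ℕ} (p l : Fin N → ℝ)
    (hp : ∀ i, 0 ≤ p i) (hpsum : ∑ i, p i = 1)
    (hl : ∀ i, 0 ≤ l i) (G : ℝ) (hlG : ∀ i, l i ≤ G)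
    (η : ℝ) (hη : 0 < η) :
    (1 / η) * Real.log (∑ i, p i * Real.exp (-η * l i))
      ≤ -(∑ i, p i * l i) + (η / 2) * ∑ i, p i * l i ^ 2 ∧
    (η / 2) * (∑ i, p i * l i ^ 2) ≤ (η * G / 2) * ∑ i, p i * l i := by
  set A := ∑ i, p i * l i with hA
  set B := ∑ i, p i * l i ^ 2 with hB
  have hS : 0 < ∑ i, p i * Real.exp (-η * l i) := by
    obtain ⟨i, hi⟩ : ∃ i, 0 < p i := by
      by_contra h
      push_neg at h
      have : ∑ i, p i = 0 :=
        Finset.sum_eq_zero fun i _ => le_antisymm (h i) (hp i)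
      rw [this] at hpsum; norm_num at hpsum
    exact Finset.sum_pos'
      (fun j _ => mul_nonneg (hp j) (Real.exp_pos _).le)
      ⟨i, Finset.mem_univ i, mul_pos hi (Real.exp_pos _)⟩
  have hSle : (∑ i, p i * Real.exp (-η * l i)) ≤ 1 - η * A + η ^ 2 / 2 * B := by
    have h1 : (∑ i, p i * Real.exp (-η * l i))
        ≤ ∑ i, p i * (1 - η * l i + (η * l i) ^ 2 / 2) := by
      apply Finset.sum_le_sum
      intro i _
      apply mul_le_mul_of_nonneg_left _ (hp i)
      have := exp_neg_le_quad (η * l i) (mul_nonneg hη.le (hl i))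
      simpa [neg_mul] using this
    calc (∑ i, p i * Real.exp (-η * l i)) ≤ _ := h1
      _ = 1 - η * A + η ^ 2 / 2 * B := by
        simp only [hA, hB, Finset.mul_sum, Finset.sum_sub_distrib,
          Finset.sum_add_distrib, ← Finset.sum_sub_distrib]
        rw [show (∑ i, p i * (1 - η * l i + (η * l i) ^ 2 / 2))
          = ∑ i, (p i - η * (p i * l i) + η ^ 2 / 2 * (p i * l i ^ 2)) by
            apply Finset.sum_congr rfl; intro i _; ring]
        rw [Finset.sum_add_distrib, Finset.sum_sub_distrib, hpsum,
          ← Finset.mul_sum, ← Finset.mul_sum]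
  constructor
  · have hlog : Real.log (∑ i, p i * Real.exp (-η * l i)) ≤ -(η * A) + η ^ 2 / 2 * B := by
      have := Real.log_le_sub_one_of_pos hS
      linarith
    have h2 := mul_le_mul_of_nonneg_left hlog (by positivity : (0:ℝ) ≤ 1 / η)
    calc (1 / η) * Real.log (∑ i, p i * Real.exp (-η * l i))
        ≤ (1 / η) * (-(η * A) + η ^ 2 / 2 * B) := h2
      _ = -A + η / 2 * B := by field_simp
  · have hBA : B ≤ G * A := by
      rw [hA, hB, Finset.mul_sum]
      apply Finset.sum_le_sum
      intro i _
      have : l i ^ 2 ≤ G * l i := by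
        have := mul_le_mul_of_nonneg_right (hlG i) (hl i)
        nlinarith [hl i]
      calc p i * l i ^ 2 ≤ p i * (G * l i) :=
            mul_le_mul_of_nonneg_left this (hp i)
        _ = G * (p i * l i) := by ring
    have := mul_le_mul_of_nonneg_left hBA (by positivity : (0:ℝ) ≤ η / 2)
    calc (η / 2) * B ≤ (η / 2) * (G * A) := this
      _ = (η * G / 2) * A := by ring
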